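/- Let n ≥ 2 and let G ⊂ GL(n,ℝ) be the standard unipotent group of upper triangular matrices with unit diagonal. An element g ∈ GL(n,ℝ) satisfies p ∘ g = p for every G-invariant polynomial function p on ℝⁿ if and only if the last row of g is (0, …, 0, 1), i.e. the n-th coordinate of g·x equals xₙ for every x ∈ ℝⁿ. -/

import Mathlib

open Matrix

/-- For `n ≥ 2`, an element `g ∈ GL(n, ℝ)` fixes every polynomial function on
`ℝⁿ` invariant under the standard unipotent group `G` (upper triangular, unit diagonal) if
and only if the last row of `g` is `(0, …, 0, 1)`, i.e. the `n`-th coordinate of `g·x`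
equals `xₙ` for every `x`. -/
theorem unipotent_prime_is_affine_stabilizer
    (n : ℕ) (hn : 2 ≤ n) (g : GL (Fin n) ℝ) :
    (∀ p : MvPolynomial (Fin n) ℝ,
      (∀ h : Matrix (Fin n) (Fin n) ℝ,
        (∀ i : Fin n, h i i = 1) → (∀ i j : Fin n, j < i → h i j = 0) →
        ∀ x : Fin n → ℝ, MvPolynomial.eval (h.mulVec x) p = MvPolynomial.eval x p) →
      ∀ x : Fin n → ℝ,
        MvPolynomial.eval ((g : Matrix (Fin n) (Fin n) ℝ).mulVec x) p = MvPolynomial.eval x p)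
    ↔ ∀ x : Fin n → ℝ,
        (g : Matrix (Fin n) (Fin n) ℝ).mulVec x ⟨n - 1, by omega⟩ = x ⟨n - 1, by omega⟩ := by
  set L : Fin n := ⟨n - 1, by omega⟩ with hL
  have hjL : ∀ j : Fin n, j ≤ L := by
    intro j
    rw [Fin.le_def]
    show j.val ≤ n - 1
    have := j.isLt
    omega
  set M : Matrix (Fin n) (Fin n) ℝ := (g : Matrix (Fin n) (Fin n) ℝ) with hM
  constructor
  · intro hg x
    have hinv : ∀ h : Matrix (Fin n) (Fin n) ℝ,
        (∀ i : Fin n, h i i = 1) → (∀ i j : Fin n, j < i → h i j = 0) →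
        ∀ x : Fin n → ℝ,
          MvPolynomial.eval (h.mulVec x) (MvPolynomial.X L) =
            MvPolynomial.eval x (MvPolynomial.X L) := by
      intro h h1 h0 x
      simp only [MvPolynomial.eval_X]
      show (Finset.univ.sum fun j => h L j * x j) = x L
      rw [Finset.sum_eq_single L]
      · rw [h1 L, one_mul]
      · intro j _ hj
        rw [h0 L j (lt_of_le_of_ne (hjL j) hj), zero_mul]
      · intro hc; exact absurd (Finset.mem_univ L) hc
    have := hg (MvPolynomial.X L) hinv x
    simpa using this
  · intro hlast p hp x
    -- Key: on vectors with nonzero last coordinate, g agrees with a unipotent element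
    have key : ∀ y : Fin n → ℝ, y L ≠ 0 →
        MvPolynomial.eval (M.mulVec y) p = MvPolynomial.eval y p := by
      intro y hy
      set c : Fin n → ℝ := fun i => (M.mulVec y i - y i) / y L with hc
      set h : Matrix (Fin n) (Fin n) ℝ :=
        fun i j => if i = j then 1 else if j = L then c i else 0 with hh
      have h1 : ∀ i : Fin n, h i i = 1 := by intro i; simp [hh]
      have h0 : ∀ i j : Fin n, j < i → h i j = 0 := by
        intro i j hij
        have hne : i ≠ j := (ne_of_lt hij).symm
        have hjne : j ≠ L := by
          intro hjL'
          exact absurd (lt_of_lt_of_le hij (hjL i)) (by rw [hjL']; exact lt_irrefl L)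
        simp [hh, hne, hjne]
      have hmv : h.mulVec y = M.mulVec y := by
        funext i
        show (Finset.univ.sum fun j => h i j * y j) = M.mulVec y i
        by_cases hiL : i = L
        · rw [Finset.sum_eq_single i]
          · rw [h1 i, one_mul, hiL]; exact (hlast y).symm
          · intro j _ hj
            have hjne : j ≠ L := hiL ▸ hj
            have : h i j = 0 := by simp [hh, (Ne.symm hj), hjne]
            rw [this, zero_mul]
          · intro hc'; exact absurd (Finset.mem_univ i) hc'
        · have hsub : ({i, L} : Finset (Fin n)) ⊆ Finset.univ := Finset.subset_univ _
          rw [← Finset.sum_subset hsub]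
          · rw [Finset.sum_pair hiL]
            have hii : h i i = 1 := h1 i
            have hiLv : h i L = c i := by simp [hh, hiL]
            rw [hii, hiLv, one_mul, hc]
            field_simp
            ring
          · intro j _ hj
            simp only [Finset.mem_insert, Finset.mem_singleton, not_or] at hj
            have : h i j = 0 := by simp [hh, (Ne.symm hj.1), hj.2]
            rw [this, zero_mul]
      rw [← hmv]
      exact hp h h1 h0 y
    -- Extend to all vectors by continuity
    by_cases hx : x L ≠ 0
    · exact key x hx
    · push_neg at hx
      have hxupd : Function.update x L 0 = x := by rw [← hx]; exact Function.update_eq_self L x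
      have hcu : Continuous fun t : ℝ => Function.update x L t := by
        apply continuous_pi
        intro i
        by_cases hiL : i = L
        · subst hiL; simpa [Function.update_self] using continuous_id'
        · simpa [Function.update_of_ne hiL] using continuous_const
      have hcmv : Continuous fun y : Fin n → ℝ => M.mulVec y := by
        apply continuous_pi
        intro i
        simp only [Matrix.mulVec, dotProduct]
        exact continuous_finset_sum _ fun j _ => continuous_const.mul (continuous_apply j)
      have hF : Continuous fun y : Fin n → ℝ =>
          MvPolynomial.eval (M.mulVec y) p - MvPolynomial.eval y p :=
        ((MvPolynomial.continuous_eval p).comp hcmv).sub (MvPolynomial.continuous_eval p)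
      have hFc : Continuous fun t : ℝ =>
          MvPolynomial.eval (M.mulVec (Function.update x L t)) p -
            MvPolynomial.eval (Function.update x L t) p := hF.comp hcu
      have hev : ∀ t : ℝ, t ≠ 0 →
          MvPolynomial.eval (M.mulVec (Function.update x L t)) p -
            MvPolynomial.eval (Function.update x L t) p = 0 := by
        intro t ht
        have := key (Function.update x L t) (by simp [Function.update_self]; exact ht)
        linarith [this]
      have htend : Filter.Tendsto (fun t : ℝ =>
          MvPolynomial.eval (M.mulVec (Function.update x L t)) p -
            MvPolynomial.eval (Function.update x L t) p) (nhdsWithin 0 {t : ℝ | t ≠ 0})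
          (nhds (MvPolynomial.eval (M.mulVec x) p - MvPolynomial.eval x p)) := by
        have := hFc.continuousAt (x := (0 : ℝ))
        rw [ContinuousAt] at this
        simpa [hxupd] using this.mono_left nhdsWithin_le_nhds
      have hzero : Filter.Tendsto (fun t : ℝ =>
          MvPolynomial.eval (M.mulVec (Function.update x L t)) p -
            MvPolynomial.eval (Function.update x L t) p) (nhdsWithin 0 {t : ℝ | t ≠ 0})
          (nhds 0) := by
        apply Filter.Tendsto.congr' _ tendsto_const_nhds
        filter_upwards [self_mem_nhdsWithin] with t ht
        exact (hev t ht).symm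
      have : MvPolynomial.eval (M.mulVec x) p - MvPolynomial.eval x p = 0 := by
        haveI hne : (nhdsWithin (0 : ℝ) {t : ℝ | t ≠ 0}).NeBot := by
          have heq : {t : ℝ | t ≠ 0} = ({0} : Set ℝ)ᶜ := by ext t; simp
          rw [heq]
          infer_instance
        exact tendsto_nhds_unique htend hzero
      linarith [this]
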